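/- arXiv:2305.17921 — 2 statements merged into one kernel-verified Lean document; each statement's English description precedes it below -/
import Mathlib

section
/- If ξ(t)ᵀ(W(t)ᵀ P W(t) + U)ξ(t) ≤ 0 for all t (for instance when W(t)ᵀ P W(t) + U is negative semidefinite for all t), then the filter error satisfies the criterion: for all T, sum_{t=0}^T ||e(t)||² ≤ μ₁ sum_{t=0}^T ||x(t)||² + μ₂ sum_{t=0}^T ||w(t)||² + e(0)ᵀ P e(0), where e(t) evolves as e(t+1) = W(t)ξ(t) with ξ(t) the stacked vector (e(t), x(t), w(t)) and U = diag(−P+I, −μ₁I, −μ₂I). -/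
open Matrix

/-- If `ξ(t)ᵀ(W(t)ᵀPW(t)+U)ξ(t) ≤ 0` for all `t`, then the filter error satisfies the
H∞-type criterion with constant `e(0)ᵀPe(0)`. -/
theorem stmt_6 {n p q : ℕ}
    (A : Matrix (Fin n) (Fin n) ℝ) (ΔA : ℕ → Matrix (Fin n) (Fin n) ℝ)
    (L : Matrix (Fin n) (Fin p) ℝ) (C : Matrix (Fin p) (Fin n) ℝ)
    (D : Matrix (Fin n) (Fin q) ℝ) (E : Matrix (Fin p) (Fin q) ℝ)
    (P : Matrix (Fin n) (Fin n) ℝ) (hP : P.PosDef) (μ₁ μ₂ : ℝ)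
    (hμ₁ : 0 < μ₁) (hμ₂ : 0 < μ₂)
    (e x : ℕ → Fin n → ℝ) (w : ℕ → Fin q → ℝ)
    (W : ℕ → Matrix (Fin n) ((Fin n ⊕ Fin n) ⊕ Fin q) ℝ)
    (hW : ∀ t, W t = Matrix.fromCols
      (Matrix.fromCols (A - L * C) (ΔA t)) (D - L * E))
    (ξ : ℕ → ((Fin n ⊕ Fin n) ⊕ Fin q) → ℝ)
    (hξ : ∀ t, ξ t = Sum.elim (Sum.elim (e t) (x t)) (w t))
    (hdyn : ∀ t, e (t + 1) =
      (A - L * C).mulVec (e t) + (ΔA t).mulVec (x t) + (D - L * E).mulVec (w t))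
    (U : Matrix ((Fin n ⊕ Fin n) ⊕ Fin q) ((Fin n ⊕ Fin n) ⊕ Fin q) ℝ)
    (hU : U = Matrix.fromBlocks
      (Matrix.fromBlocks (-P + 1) 0 0 (-(μ₁ • (1 : Matrix (Fin n) (Fin n) ℝ)))) 0 0
      (-(μ₂ • (1 : Matrix (Fin q) (Fin q) ℝ))))
    (hneg : ∀ t, (ξ t) ⬝ᵥ ((W t)ᵀ * P * (W t) + U).mulVec (ξ t) ≤ 0) :
    ∀ T : ℕ,
      ∑ t ∈ Finset.range (T + 1), (e t) ⬝ᵥ (e t) ≤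
        μ₁ * ∑ t ∈ Finset.range (T + 1), (x t) ⬝ᵥ (x t) +
        μ₂ * ∑ t ∈ Finset.range (T + 1), (w t) ⬝ᵥ (w t) +
        (e 0) ⬝ᵥ P.mulVec (e 0) := by

  -- Key step inequality
  have key : ∀ t, e (t+1) ⬝ᵥ P.mulVec (e (t+1)) - e t ⬝ᵥ P.mulVec (e t)
      + e t ⬝ᵥ e t - μ₁ * (x t ⬝ᵥ x t) - μ₂ * (w t ⬝ᵥ w t) ≤ 0 := by
    intro t
    have h := hneg t
    rw [hW, hξ, hU] at h
    have hWe : (Matrix.fromCols (Matrix.fromCols (A - L * C) (ΔA t)) (D - L * E)).mulVec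
        (Sum.elim (Sum.elim (e t) (x t)) (w t)) = e (t+1) := by
      rw [Matrix.fromCols_mulVec_sumElim, Matrix.fromCols_mulVec_sumElim, hdyn]
    rw [Matrix.add_mulVec, dotProduct_add] at h
    rw [show (Matrix.fromCols (Matrix.fromCols (A - L * C) (ΔA t)) (D - L * E))ᵀ * P *
        (Matrix.fromCols (Matrix.fromCols (A - L * C) (ΔA t)) (D - L * E)) =
        (Matrix.fromCols (Matrix.fromCols (A - L * C) (ΔA t)) (D - L * E))ᵀ *
        (P * (Matrix.fromCols (Matrix.fromCols (A - L * C) (ΔA t)) (D - L * E))) from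
        Matrix.mul_assoc _ _ _] at h
    rw [← Matrix.mulVec_mulVec, Matrix.dotProduct_mulVec, Matrix.vecMul_transpose,
        ← Matrix.mulVec_mulVec, hWe] at h
    simp only [Matrix.fromBlocks_mulVec, Sum.elim_comp_inl, Sum.elim_comp_inr,
      sumElim_dotProduct_sumElim,
      Matrix.zero_mulVec, add_zero, zero_add, Matrix.neg_mulVec,
      Matrix.add_mulVec, Matrix.smul_mulVec, Matrix.one_mulVec,
      dotProduct_add, dotProduct_neg, dotProduct_smul,
      smul_eq_mul] at h
    linarith
  have hpsd := hP.posSemidef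
  -- strengthened statement by induction
  intro T
  have main : ∀ T : ℕ,
      ∑ t ∈ Finset.range (T + 1), (e t) ⬝ᵥ (e t) + e (T+1) ⬝ᵥ P.mulVec (e (T+1)) ≤
        μ₁ * ∑ t ∈ Finset.range (T + 1), (x t) ⬝ᵥ (x t) +
        μ₂ * ∑ t ∈ Finset.range (T + 1), (w t) ⬝ᵥ (w t) +
        (e 0) ⬝ᵥ P.mulVec (e 0) := by
    intro T
    induction T with
    | zero =>
      have := key 0
      simp only [zero_add, Finset.sum_range_one]
      linarith
    | succ T ih =>
      have := key (T+1)
      rw [Finset.sum_range_succ (n := T+1), Finset.sum_range_succ (n := T+1) (f := fun t => x t ⬝ᵥ x t),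
        Finset.sum_range_succ (n := T+1) (f := fun t => w t ⬝ᵥ w t)]
      nlinarith [ih]
  have hT := main T
  have hpos : 0 ≤ e (T+1) ⬝ᵥ P.mulVec (e (T+1)) := by simpa using hpsd.dotProduct_mulVec_nonneg (e (T+1))
  linarith
end

section
/- Main theorem (finite-dimensional LMI version): Let A, C, D, E be matrices of the queue model dimensions and let Θ ≥ 0. Suppose there exist a symmetric positive definite P, a matrix R, and scalars μ₁, μ₂, μ₃ > 0 such that the 5×5 block symmetric matrix [[−μ₃I, ΘP, 0, 0, 0], [∗, −P, PA−RC, 0, PD−RE], [∗, ∗, −P+I, 0, 0], [∗, ∗, ∗, (μ₃−μ₁)I, 0], [∗, ∗, ∗, ∗, −μ₂I]] is negative definite. Then with L = P⁻¹R, for any sequences x, w and any uncertainty ΔA(t) with sup_t ||ΔA(t)||₂ ≤ Θ (spectral norm), the error e(t+1) = (A−LC)e(t) + ΔA(t)x(t) + (D−LE)w(t) satisfies, for all T, sum_{t=0}^T ||e(t)||² ≤ μ₁ sum_{t=0}^T ||x(t)||² + μ₂ sum_{t=0}^T ||w(t)||² + e(0)ᵀPe(0). -/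
open Matrix

/-- `M` is negative definite: `vᵀ M v < 0` for all nonzero `v`. -/
def NegDef {n : Type*} [Fintype n] (M : Matrix n n ℝ) : Prop :=
  ∀ v : n → ℝ, v ≠ 0 → v ⬝ᵥ M.mulVec v < 0

lemma negdef_le {n : Type*} [Fintype n] {M : Matrix n n ℝ} (h : NegDef M) (v : n → ℝ) :
    v ⬝ᵥ M.mulVec v ≤ 0 := by
  by_cases hv : v = 0
  · simp [hv]
  · exact (h v hv).le

lemma vecMul_smul_one {k : ℕ} (r : ℝ) (v : Fin k → ℝ) :
    v ᵥ* (r • (1 : Matrix (Fin k) (Fin k) ℝ)) = r • v := by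
  ext i
  simp [Matrix.vecMul, dotProduct, Matrix.one_apply, mul_comm]

lemma expandQ {n q : ℕ} (Θ μ₁ μ₂ μ₃ : ℝ)
    (P : Matrix (Fin n) (Fin n) ℝ) (PA : Matrix (Fin n) (Fin n) ℝ)
    (PD : Matrix (Fin n) (Fin q) ℝ)
    (a b c₁ c₂ : Fin n → ℝ) (d : Fin q → ℝ) :
    (Sum.elim a (Sum.elim b (Sum.elim (Sum.elim c₁ c₂) d))) ⬝ᵥ
      (Matrix.fromBlocks
      (-(μ₃ • (1 : Matrix (Fin n) (Fin n) ℝ)))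
      (Matrix.fromCols (Θ • P) 0)
      (Matrix.fromCols (Θ • P) 0)ᵀ
      (Matrix.fromBlocks (-P)
        (Matrix.fromCols (Matrix.fromCols PA 0) PD)
        (Matrix.fromCols (Matrix.fromCols PA 0) PD)ᵀ
        (Matrix.fromBlocks
          (Matrix.fromBlocks (-P + 1) 0 0 ((μ₃ - μ₁) • (1 : Matrix (Fin n) (Fin n) ℝ)))
          0 0 (-(μ₂ • (1 : Matrix (Fin q) (Fin q) ℝ)))))).mulVec
      (Sum.elim a (Sum.elim b (Sum.elim (Sum.elim c₁ c₂) d))) =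
    -(μ₃ * (a ⬝ᵥ a)) + 2 * Θ * (a ⬝ᵥ P.mulVec b)
      - b ⬝ᵥ P.mulVec b + 2 * (b ⬝ᵥ PA.mulVec c₁) + 2 * (b ⬝ᵥ PD.mulVec d)
      - c₁ ⬝ᵥ P.mulVec c₁ + c₁ ⬝ᵥ c₁ + (μ₃ - μ₁) * (c₂ ⬝ᵥ c₂) - μ₂ * (d ⬝ᵥ d) := by
  simp [Matrix.fromBlocks_mulVec, Matrix.fromCols_mulVec_sumElim,
    Matrix.transpose_fromCols, Matrix.fromRows_mulVec, sumElim_dotProduct_sumElim,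
    Matrix.add_mulVec, Matrix.neg_mulVec, Matrix.smul_mulVec, Matrix.one_mulVec,
    dotProduct_add, dotProduct_neg, dotProduct_smul, neg_dotProduct, smul_dotProduct,
    Matrix.dotProduct_mulVec, Matrix.vecMul_transpose, Matrix.mulVec_transpose,
    vecMul_smul_one, smul_eq_mul]
  rw [dotProduct_comm c₁ (b ᵥ* PA), dotProduct_comm d (b ᵥ* PD), dotProduct_comm b (a ᵥ* P)]
  ring


lemma step {n q : ℕ} {Θ μ₁ μ₂ μ₃ : ℝ} (hμ₃ : 0 < μ₃)
    {P Ab F : Matrix (Fin n) (Fin n) ℝ} {Db : Matrix (Fin n) (Fin q) ℝ}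
    (hPsymm : Pᵀ = P)
    (hLMI : NegDef (Matrix.fromBlocks
      (-(μ₃ • (1 : Matrix (Fin n) (Fin n) ℝ)))
      (Matrix.fromCols (Θ • P) 0)
      (Matrix.fromCols (Θ • P) 0)ᵀ
      (Matrix.fromBlocks (-P)
        (Matrix.fromCols (Matrix.fromCols (P * Ab) 0) (P * Db))
        (Matrix.fromCols (Matrix.fromCols (P * Ab) 0) (P * Db))ᵀ
        (Matrix.fromBlocks
          (Matrix.fromBlocks (-P + 1) 0 0 ((μ₃ - μ₁) • (1 : Matrix (Fin n) (Fin n) ℝ)))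
          0 0 (-(μ₂ • (1 : Matrix (Fin q) (Fin q) ℝ)))))))
    (hF : ((1 : Matrix (Fin n) (Fin n) ℝ) - Fᵀ * F).PosSemidef)
    (c₁ c₂ : Fin n → ℝ) (d : Fin q → ℝ)
    (b : Fin n → ℝ) (hb : b = Ab.mulVec c₁ + Θ • F.mulVec c₂ + Db.mulVec d) :
    b ⬝ᵥ P.mulVec b + c₁ ⬝ᵥ c₁ ≤ c₁ ⬝ᵥ P.mulVec c₁ + μ₁ * (c₂ ⬝ᵥ c₂) + μ₂ * (d ⬝ᵥ d) := by
  set a : Fin n → ℝ := F.mulVec c₂ with ha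
  have hQ := negdef_le hLMI (Sum.elim a (Sum.elim b (Sum.elim (Sum.elim c₁ c₂) d)))
  rw [expandQ] at hQ
  -- symmetry of P in dot products
  have hsym : ∀ u v : Fin n → ℝ, u ⬝ᵥ P.mulVec v = v ⬝ᵥ P.mulVec u := by
    intro u v
    rw [Matrix.dotProduct_mulVec, ← Matrix.mulVec_transpose, hPsymm, dotProduct_comm]
  -- P *ᵥ b decomposition
  have hPb : P.mulVec b = (P * Ab).mulVec c₁ + Θ • P.mulVec a + (P * Db).mulVec d := by
    rw [hb]
    simp [Matrix.mulVec_add, Matrix.mulVec_smul, Matrix.mulVec_mulVec, ha]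
  have h1 : b ⬝ᵥ (P * Ab).mulVec c₁ + b ⬝ᵥ (P * Db).mulVec d
      = b ⬝ᵥ P.mulVec b - Θ * (b ⬝ᵥ P.mulVec a) := by
    rw [hPb]
    simp [dotProduct_add, dotProduct_smul, smul_eq_mul]
    ring
  have h2 : a ⬝ᵥ P.mulVec b = b ⬝ᵥ P.mulVec a := hsym a b
  -- contraction fact
  have h3 : a ⬝ᵥ a ≤ c₂ ⬝ᵥ c₂ := by
    have := hF.dotProduct_mulVec_nonneg c₂
    simp only [Matrix.sub_mulVec, dotProduct_sub, Matrix.one_mulVec, star_trivial,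
      ← Matrix.mulVec_mulVec, Matrix.dotProduct_mulVec c₂ Fᵀ, Matrix.vecMul_transpose] at this
    linarith
  rw [h2] at hQ
  have h4 := mul_le_mul_of_nonneg_left h3 hμ₃.le
  nlinarith [hQ, h1, h4]

/-- Main theorem (finite-dimensional LMI version): if the 5×5 block symmetric matrix
`[[−μ₃I, ΘP, 0, 0, 0], [∗, −P, PA−RC, 0, PD−RE], [∗, ∗, −P+I, 0, 0],
[∗, ∗, ∗, (μ₃−μ₁)I, 0], [∗, ∗, ∗, ∗, −μ₂I]]` is negative definite, then with `L = P⁻¹R`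
the error of the filter satisfies the H∞-type criterion for every admissible
uncertainty of spectral norm at most `Θ` (i.e. `ΔA(t) = ΘF(t)` with `F(t)ᵀF(t) ⪯ I`). -/
theorem stmt_18 {n p q : ℕ}
    (A : Matrix (Fin n) (Fin n) ℝ) (C : Matrix (Fin p) (Fin n) ℝ)
    (D : Matrix (Fin n) (Fin q) ℝ) (E : Matrix (Fin p) (Fin q) ℝ)
    (Θ : ℝ) (hΘ : 0 ≤ Θ)
    (P : Matrix (Fin n) (Fin n) ℝ) (hP : P.PosDef)
    (R : Matrix (Fin n) (Fin p) ℝ) (μ₁ μ₂ μ₃ : ℝ)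
    (hμ₁ : 0 < μ₁) (hμ₂ : 0 < μ₂) (hμ₃ : 0 < μ₃)
    (hLMI : NegDef (Matrix.fromBlocks
      (-(μ₃ • (1 : Matrix (Fin n) (Fin n) ℝ)))
      (Matrix.fromCols (Θ • P) 0)
      (Matrix.fromCols (Θ • P) 0)ᵀ
      (Matrix.fromBlocks (-P)
        (Matrix.fromCols (Matrix.fromCols (P * A - R * C) 0) (P * D - R * E))
        (Matrix.fromCols (Matrix.fromCols (P * A - R * C) 0) (P * D - R * E))ᵀ
        (Matrix.fromBlocks
          (Matrix.fromBlocks (-P + 1) 0 0 ((μ₃ - μ₁) • (1 : Matrix (Fin n) (Fin n) ℝ)))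
          0 0 (-(μ₂ • (1 : Matrix (Fin q) (Fin q) ℝ)))))))
    (L : Matrix (Fin n) (Fin p) ℝ) (hL : L = P⁻¹ * R)
    (ΔA : ℕ → Matrix (Fin n) (Fin n) ℝ)
    (hΔA : ∀ t, ∃ F : Matrix (Fin n) (Fin n) ℝ,
      ΔA t = Θ • F ∧ ((1 : Matrix (Fin n) (Fin n) ℝ) - Fᵀ * F).PosSemidef)
    (e x : ℕ → Fin n → ℝ) (w : ℕ → Fin q → ℝ)
    (hdyn : ∀ t, e (t + 1) =
      (A - L * C).mulVec (e t) + (ΔA t).mulVec (x t) + (D - L * E).mulVec (w t)) :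
    ∀ T : ℕ,
      ∑ t ∈ Finset.range (T + 1), (e t) ⬝ᵥ (e t) ≤
        μ₁ * ∑ t ∈ Finset.range (T + 1), (x t) ⬝ᵥ (x t) +
        μ₂ * ∑ t ∈ Finset.range (T + 1), (w t) ⬝ᵥ (w t) +
        (e 0) ⬝ᵥ P.mulVec (e 0) := by
  have hPsymm : Pᵀ = P := by
    have h := hP.1
    rw [Matrix.IsHermitian, Matrix.conjTranspose_eq_transpose_of_trivial] at h
    exact h
  have hPL : P * L = R := by
    rw [hL, ← Matrix.mul_assoc, Matrix.mul_nonsing_inv P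
      ((Matrix.isUnit_iff_isUnit_det P).1 hP.isUnit), Matrix.one_mul]
  have hPA : P * A - R * C = P * (A - L * C) := by
    rw [Matrix.mul_sub, ← Matrix.mul_assoc, hPL]
  have hPD : P * D - R * E = P * (D - L * E) := by
    rw [Matrix.mul_sub, ← Matrix.mul_assoc, hPL]
  rw [hPA, hPD] at hLMI
  -- per-step dissipation
  have key : ∀ t : ℕ,
      e (t+1) ⬝ᵥ P.mulVec (e (t+1)) + e t ⬝ᵥ e t ≤
        e t ⬝ᵥ P.mulVec (e t) + μ₁ * (x t ⬝ᵥ x t) + μ₂ * (w t ⬝ᵥ w t) := by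
    intro t
    obtain ⟨F, hΔ, hFpsd⟩ := hΔA t
    refine step hμ₃ hPsymm hLMI hFpsd (e t) (x t) (w t) (e (t+1)) ?_
    rw [hdyn t, hΔ, Matrix.smul_mulVec]
  -- strengthened statement by induction
  have main : ∀ T : ℕ,
      ∑ t ∈ Finset.range (T + 1), (e t) ⬝ᵥ (e t) + e (T+1) ⬝ᵥ P.mulVec (e (T+1)) ≤
        μ₁ * ∑ t ∈ Finset.range (T + 1), (x t) ⬝ᵥ (x t) +
        μ₂ * ∑ t ∈ Finset.range (T + 1), (w t) ⬝ᵥ (w t) +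
        (e 0) ⬝ᵥ P.mulVec (e 0) := by
    intro T
    induction T with
    | zero => simp only [zero_add, Finset.sum_range_one]; linarith [key 0]
    | succ T ih =>
      have h := key (T+1)
      simp only [Finset.sum_range_succ (n := T + 1)]
      ring_nf
      ring_nf at ih h
      linarith
  intro T
  have hnn : 0 ≤ e (T+1) ⬝ᵥ P.mulVec (e (T+1)) := by
    simpa using hP.posSemidef.dotProduct_mulVec_nonneg (e (T+1))
  linarith [main T]
end
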